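/- If the translation group ℤ² acts on the affine space A of finitely supported φ : ℤ² → ℝ with ∑ φ = 1, then any two affine translation-equivariant operators M, M' : A → ℝ² differ by a constant: M(φ) - M'(φ) is independent of φ. -/
import Mathlib

noncomputable def emb (p : ℤ × ℤ) : ℝ × ℝ := ((p.1 : ℝ), (p.2 : ℝ))

noncomputable def shiftBy (u : ℤ × ℤ) (φ : ℤ × ℤ →₀ ℝ) : ℤ × ℤ →₀ ℝ :=
  Finsupp.mapDomain (fun p => p + u) φ

lemma shiftBy_single (u : ℤ × ℤ) : shiftBy u (Finsupp.single 0 1) = Finsupp.single u 1 := by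
  simp [shiftBy, Finsupp.mapDomain_single]

lemma single_sum_one (p : ℤ × ℤ) :
    (Finsupp.single p (1:ℝ)).sum (fun _ a => a) = 1 := by
  simp [Finsupp.sum_single_index]

lemma repM (M : (ℤ × ℤ →₀ ℝ) → ℝ × ℝ)
    (haff : ∀ (n : ℕ) (α : Fin n → ℝ) (φ : Fin n → (ℤ × ℤ →₀ ℝ)),
      (∀ i, (φ i).sum (fun _ a => a) = 1) → ∑ i, α i = 1 →
      M (∑ i, α i • φ i) = ∑ i, α i • M (φ i))
    (hequiv : ∀ (u : ℤ × ℤ) (φ : ℤ × ℤ →₀ ℝ), φ.sum (fun _ a => a) = 1 →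
      M (shiftBy u φ) = M φ + emb u)
    (φ : ℤ × ℤ →₀ ℝ) (hφ : φ.sum (fun _ a => a) = 1) :
    M φ = M (Finsupp.single 0 1) + ∑ p ∈ φ.support, φ p • emb p := by
  classical
  set s := φ.support with hs
  set n := s.card with hn
  set e : Fin n ≃ s := s.equivFin.symm with he
  set α : Fin n → ℝ := fun i => φ (e i) with hα
  set ψ : Fin n → (ℤ × ℤ →₀ ℝ) := fun i => Finsupp.single ((e i : ℤ × ℤ)) 1 with hψ
  have hψsum : ∀ i, (ψ i).sum (fun _ a => a) = 1 := fun i => single_sum_one _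
  have hαsum : ∑ i, α i = 1 := by
    rw [hα]
    rw [Fintype.sum_equiv e _ (fun x : s => φ x) (fun i => rfl)]
    rw [Finset.sum_coe_sort s (fun p => φ p)]
    simpa [Finsupp.sum] using hφ
  have hrep : ∑ i, α i • ψ i = φ := by
    rw [hα, hψ]
    rw [Fintype.sum_equiv e _ (fun x : s => φ x • Finsupp.single (x : ℤ × ℤ) (1:ℝ)) (fun i => rfl)]
    rw [Finset.sum_coe_sort s (fun p => φ p • Finsupp.single p (1:ℝ))]
    have : ∀ p ∈ s, φ p • Finsupp.single p (1:ℝ) = Finsupp.single p (φ p) := by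
      intro p _; rw [Finsupp.smul_single, smul_eq_mul, mul_one]
    rw [Finset.sum_congr rfl this]
    exact Finsupp.sum_single φ
  have hMψ : ∀ i, M (ψ i) = M (Finsupp.single 0 1) + emb (e i) := by
    intro i
    have h := hequiv ((e i : ℤ × ℤ)) (Finsupp.single 0 1) (single_sum_one 0)
    rw [shiftBy_single] at h
    simpa [hψ] using h
  calc M φ = M (∑ i, α i • ψ i) := by rw [hrep]
    _ = ∑ i, α i • M (ψ i) := haff n α ψ hψsum hαsum
    _ = ∑ i, (α i • M (Finsupp.single 0 1) + α i • emb (e i)) := by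
        simp only [hMψ, smul_add]
    _ = (∑ i, α i) • M (Finsupp.single 0 1) + ∑ i, α i • emb (e i) := by
        rw [Finset.sum_add_distrib, Finset.sum_smul]
    _ = M (Finsupp.single 0 1) + ∑ p ∈ s, φ p • emb p := by
        rw [hαsum, one_smul]
        congr 1
        rw [Fintype.sum_equiv e _ (fun x : s => φ x • emb x) (fun i => rfl)]
        exact Finset.sum_coe_sort s (fun p => φ p • emb p)

/-- Any two affine translation-equivariant operators on the affine space
`{φ finitely supported, ∑ φ = 1}` differ by a constant. -/
theorem stmt_16 (M M' : (ℤ × ℤ →₀ ℝ) → ℝ × ℝ)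
    (haff : ∀ (n : ℕ) (α : Fin n → ℝ) (φ : Fin n → (ℤ × ℤ →₀ ℝ)),
      (∀ i, (φ i).sum (fun _ a => a) = 1) → ∑ i, α i = 1 →
      M (∑ i, α i • φ i) = ∑ i, α i • M (φ i))
    (haff' : ∀ (n : ℕ) (α : Fin n → ℝ) (φ : Fin n → (ℤ × ℤ →₀ ℝ)),
      (∀ i, (φ i).sum (fun _ a => a) = 1) → ∑ i, α i = 1 →
      M' (∑ i, α i • φ i) = ∑ i, α i • M' (φ i))
    (hequiv : ∀ (u : ℤ × ℤ) (φ : ℤ × ℤ →₀ ℝ), φ.sum (fun _ a => a) = 1 →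
      M (shiftBy u φ) = M φ + emb u)
    (hequiv' : ∀ (u : ℤ × ℤ) (φ : ℤ × ℤ →₀ ℝ), φ.sum (fun _ a => a) = 1 →
      M' (shiftBy u φ) = M' φ + emb u) :
    ∀ φ ψ : ℤ × ℤ →₀ ℝ, φ.sum (fun _ a => a) = 1 → ψ.sum (fun _ a => a) = 1 →
      M φ - M' φ = M ψ - M' ψ := by
  intro φ ψ hφ hψ
  rw [repM M haff hequiv φ hφ, repM M' haff' hequiv' φ hφ,
      repM M haff hequiv ψ hψ, repM M' haff' hequiv' ψ hψ]
  abel
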